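/- Suppose the link condition holds with exponent a > 0 and constant m > 0, let 0 ≤ s ≤ a, β := (a − s)/(2(a + s)), and let α ∈ [0, 1/2]. There exists a constant c < ∞, depending only on a, s, α and m, such that for every step size γ > 0 and every positive even integer T with γ‖T_s‖ < 1/4, every u ∈ H and every R > 0: ‖T_s^{α} R̄_T(T_s) u‖_H ≤ c (γT)^{−α} ( d(R) + R (γT)^{−β} ). (This is the first bound of Proposition C.1; R̄_T(T_s) u = L^s(f_H − g̃_T) is the approximation error of tail-averaged gradient descent in the Hilbert scale.) -/

import Mathlib

set_option maxHeartbeats 1000000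

/-- Fractional power `A^r` (for `r : ℝ`) of a bounded operator, via the continuous
functional calculus for self-adjoint operators (real power `x ↦ x ^ r`). -/
noncomputable def opPow {H : Type*} [NormedAddCommGroup H] [InnerProductSpace ℂ H]
    [CompleteSpace H] (A : H →L[ℂ] H) (r : ℝ) : H →L[ℂ] H :=
  cfc (fun x : ℝ => x ^ r) A

/-- The tail-averaged gradient-descent filter operator
`Ḡ_T(Q) = (2/T) ∑_{t=T/2+1}^{T} γ ∑_{k=0}^{t-1} (I - γQ)^k`. -/
noncomputable def Gbar {H : Type*} [NormedAddCommGroup H] [InnerProductSpace ℂ H]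
    [CompleteSpace H] (γ : ℝ) (T : ℕ) (Q : H →L[ℂ] H) : H →L[ℂ] H :=
  (2 / (T : ℂ)) • ∑ t ∈ Finset.Ioc (T / 2) T,
    (γ : ℂ) • ∑ k ∈ Finset.range t, (1 - (γ : ℂ) • Q) ^ k

/-- The tail-averaged gradient-descent residual operator
`R̄_T(Q) = (2/T) ∑_{t=T/2+1}^{T} (I - γQ)^t`. -/
noncomputable def Rbar {H : Type*} [NormedAddCommGroup H] [InnerProductSpace ℂ H]
    [CompleteSpace H] (γ : ℝ) (T : ℕ) (Q : H →L[ℂ] H) : H →L[ℂ] H :=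
  (2 / (T : ℂ)) • ∑ t ∈ Finset.Ioc (T / 2) T, (1 - (γ : ℂ) • Q) ^ t

/-- The operator `T_s = B_s^* ∘ B_s` where `B_s = S ∘ A^s` (with `A = L⁻¹`). -/
noncomputable def Ts {H K : Type*} [NormedAddCommGroup H] [InnerProductSpace ℂ H]
    [CompleteSpace H] [NormedAddCommGroup K] [InnerProductSpace ℂ K] [CompleteSpace K]
    (S : H →L[ℂ] K) (A : H →L[ℂ] H) (s : ℝ) : H →L[ℂ] H :=
  ContinuousLinearMap.adjoint (S ∘L opPow A s) ∘L (S ∘L opPow A s)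

/-- The distance function `d(R) = inf { ‖A^{a-s} h - u‖ : ‖h‖ ≤ R }` (Definition 1,
expressed through `A = L⁻¹`, with `u = L^s f_H`). -/
noncomputable def distFn {H : Type*} [NormedAddCommGroup H] [InnerProductSpace ℂ H]
    [CompleteSpace H] (A : H →L[ℂ] H) (a s : ℝ) (u : H) (R : ℝ) : ℝ :=
  ⨅ h : { h : H // ‖h‖ ≤ R }, ‖opPow A (a - s) h.1 - u‖

/-! ### Auxiliary scalar lemmas -/

open scoped InnerProductSpace

noncomputable def rfun (γ : ℝ) (T : ℕ) (x : ℝ) : ℝ :=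
  (2/(T:ℝ)) * ∑ t ∈ Finset.Ioc (T/2) T, (1-γ*x)^t

lemma aux_rpow_le_exp {z θ : ℝ} (hz : 0 ≤ z) (hθ0 : 0 ≤ θ) (hθ1 : θ ≤ 1) :
    z ^ θ ≤ Real.exp (z / 2) := by
  rcases le_or_gt z 1 with h1 | h1
  · calc z ^ θ ≤ 1 := Real.rpow_le_one hz h1 hθ0
    _ ≤ Real.exp (z / 2) := Real.one_le_exp (by linarith)
  · calc z ^ θ ≤ z ^ (1:ℝ) := Real.rpow_le_rpow_of_exponent_le h1.le hθ1
    _ = z := Real.rpow_one z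
    _ ≤ (1 + z/4)^2 := by nlinarith [sq_nonneg (1 - z/4)]
    _ ≤ Real.exp (z/4) ^ 2 := by
        have h := Real.add_one_le_exp (z/4)
        have : (0:ℝ) ≤ 1 + z/4 := by linarith
        nlinarith [Real.exp_pos (z/4)]
    _ = Real.exp (z / 2) := by
        rw [← Real.exp_nat_mul]; norm_num; ring_nf

lemma rfun_nonneg {γ x : ℝ} {T : ℕ} (hb : 0 ≤ 1 - γ * x) : 0 ≤ rfun γ T x := by
  unfold rfun
  apply mul_nonneg (by positivity)
  exact Finset.sum_nonneg fun t _ => pow_nonneg hb t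

lemma scalar_bound {γ x θ : ℝ} {T : ℕ} (hγ : 0 < γ) (hT : 0 < T) (hTe : Even T)
    (hx0 : 0 ≤ x) (hγx : γ * x < 1/4) (hθ0 : 0 ≤ θ) (hθ1 : θ ≤ 1) :
    x ^ θ * rfun γ T x ≤ (γ * T) ^ (-θ) := by
  obtain ⟨k, hk⟩ := hTe
  have hT2 : T = 2 * k := by omega
  have hk0 : 0 < k := by omega
  set b := 1 - γ * x with hbdef
  have hb0 : 0 ≤ b := by
    have : γ * x < 1 := by linarith
    simp [hbdef]; linarith
  have hb1 : b ≤ 1 := by simp [hbdef]; positivity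
  have hdiv : T / 2 = k := by omega
  have hsum : ∑ t ∈ Finset.Ioc (T/2) T, b^t ≤ (k : ℝ) * b ^ k := by
    rw [hdiv, hT2]
    calc ∑ t ∈ Finset.Ioc k (2*k), b^t
        ≤ ∑ _t ∈ Finset.Ioc k (2*k), b^k := by
          apply Finset.sum_le_sum
          intro t ht
          exact pow_le_pow_of_le_one hb0 hb1 (Finset.mem_Ioc.mp ht).1.le
      _ = (k : ℝ) * b ^ k := by
          rw [Finset.sum_const, Nat.card_Ioc]
          have h2 : 2*k-k = k := by omega
          rw [h2, nsmul_eq_mul]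
  have hrf : rfun γ T x ≤ b ^ k := by
    unfold rfun
    have h2T : (0:ℝ) < (T:ℝ) := by exact_mod_cast hT
    calc (2/(T:ℝ)) * ∑ t ∈ Finset.Ioc (T/2) T, b^t
        ≤ (2/(T:ℝ)) * ((k:ℝ) * b ^ k) := by
          apply mul_le_mul_of_nonneg_left hsum (by positivity)
      _ = b ^ k := by
          rw [hT2]; push_cast; field_simp
  have hexp : b ^ k ≤ Real.exp (-(γ * x * k)) := by
    calc b ^ k ≤ Real.exp (-(γ*x)) ^ k := by
          apply pow_le_pow_left₀ hb0
          have := Real.add_one_le_exp (-(γ*x))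
          linarith
      _ = Real.exp (-(γ * x * k)) := by
          rw [← Real.exp_nat_mul]; ring_nf
  have hT0 : (0:ℝ) < γ * T := by
    have : (0:ℝ) < (T:ℝ) := by exact_mod_cast hT
    positivity
  have hz0 : 0 ≤ γ * T * x := by positivity
  have hxeq : x ^ θ = (γ * T * x) ^ θ * (γ * T) ^ (-θ) := by
    rw [Real.rpow_neg hT0.le, ← div_eq_mul_inv, ← Real.div_rpow hz0 hT0.le]
    congr 1
    field_simp
  have key : x ^ θ ≤ Real.exp (γ * x * k) * (γ * T) ^ (-θ) := by
    rw [hxeq]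
    apply mul_le_mul_of_nonneg_right _ (by positivity)
    calc (γ * T * x) ^ θ ≤ Real.exp ((γ * T * x)/2) := aux_rpow_le_exp hz0 hθ0 hθ1
      _ = Real.exp (γ * x * k) := by rw [hT2]; push_cast; ring_nf
  calc x ^ θ * rfun γ T x ≤ x ^ θ * Real.exp (-(γ * x * k)) := by
        apply mul_le_mul_of_nonneg_left (hrf.trans hexp) (Real.rpow_nonneg hx0 θ)
    _ ≤ (Real.exp (γ * x * k) * (γ * T) ^ (-θ)) * Real.exp (-(γ * x * k)) := by
        apply mul_le_mul_of_nonneg_right key (Real.exp_pos _).le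
    _ = (γ * T) ^ (-θ) := by
        rw [mul_right_comm, ← Real.exp_add]; simp

lemma young_tangent {y t θ : ℝ} (hy : 0 ≤ y) (ht : 0 < t) (hθ0 : 0 ≤ θ) (hθ1 : θ ≤ 1) :
    y ^ θ ≤ θ * t ^ (θ-1) * y + (1-θ) * t ^ θ := by
  have hg := Real.geom_mean_le_arith_mean2_weighted (w₁ := θ) (w₂ := 1-θ) (p₁ := y) (p₂ := t)
    hθ0 (by linarith) hy ht.le (by ring)
  have htt : t * t ^ (θ - 1) = t ^ θ := by
    nth_rewrite 1 [← Real.rpow_one t]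
    rw [← Real.rpow_add ht]; congr 1; ring
  calc y ^ θ = (y ^ θ * t ^ (1-θ)) * t ^ (θ-1) := by
        rw [mul_assoc, ← Real.rpow_add ht]; simp
    _ ≤ (θ * y + (1-θ) * t) * t ^ (θ-1) :=
        mul_le_mul_of_nonneg_right hg (Real.rpow_nonneg ht.le _)
    _ = θ * t ^ (θ-1) * y + (1-θ) * (t * t ^ (θ-1)) := by ring
    _ = θ * t ^ (θ-1) * y + (1-θ) * t ^ θ := by rw [htt]

lemma young_opt {Y X N θ : ℝ} (hY : 0 ≤ Y) (hX : 0 ≤ X) (hN : 0 ≤ N)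
    (hθ0 : 0 ≤ θ) (hθ1 : θ ≤ 1)
    (h : ∀ t : ℝ, 0 < t → Y ≤ θ * t ^ (θ-1) * X + (1-θ) * t ^ θ * N) :
    Y ≤ X ^ θ * N ^ (1-θ) := by
  rcases eq_or_lt_of_le hθ0 with hθz | hθpos
  · have := h 1 one_pos
    simp [← hθz] at this ⊢
    simpa using this
  rcases eq_or_lt_of_le hθ1 with hθo | hθlt
  · have := h 1 one_pos
    simp [hθo] at this ⊢
    simpa using this
  rcases eq_or_lt_of_le hX with hX0 | hXpos
  · have hY0 : Y ≤ 0 := by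
      rcases eq_or_lt_of_le hN with hN0 | hNpos
      · have := h 1 one_pos
        simp [← hX0, ← hN0] at this
        linarith
      · by_contra hc
        push_neg at hc
        set t := (Y / (2 * (1-θ) * N)) ^ (1/θ) with htdef
        have htb : 0 < Y / (2 * (1-θ) * N) := by
          apply div_pos hc
          have : 0 < 1 - θ := by linarith
          positivity
        have ht : 0 < t := Real.rpow_pos_of_pos htb _
        have htθ : t ^ θ = Y / (2 * (1-θ) * N) := by
          rw [htdef, ← Real.rpow_mul htb.le, one_div, inv_mul_cancel₀ (ne_of_gt hθpos),
            Real.rpow_one]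
        have := h t ht
        rw [← hX0, htθ] at this
        have h1θ : 0 < 1 - θ := by linarith
        have : Y ≤ Y / 2 := by
          have : (1-θ) * (Y / (2 * (1-θ) * N)) * N = Y / 2 := by
            field_simp
          linarith [this ▸ (by linarith : Y ≤ θ * t ^ (θ-1) * 0 + (1-θ) * (Y / (2 * (1-θ) * N)) * N)]
        linarith
    have : X ^ θ * N ^ (1-θ) = 0 := by
      rw [← hX0, Real.zero_rpow (ne_of_gt hθpos), zero_mul]
    linarith
  rcases eq_or_lt_of_le hN with hN0 | hNpos
  · have hY0 : Y ≤ 0 := by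
      by_contra hc
      push_neg at hc
      set t := (Y / (2 * θ * X)) ^ (1/(θ-1)) with htdef
      have htb : 0 < Y / (2 * θ * X) := by
        apply div_pos hc; positivity
      have ht : 0 < t := Real.rpow_pos_of_pos htb _
      have htθ : t ^ (θ-1) = Y / (2 * θ * X) := by
        rw [htdef, ← Real.rpow_mul htb.le, one_div, inv_mul_cancel₀ (by linarith : θ - 1 ≠ 0),
          Real.rpow_one]
      have h2 := h t ht
      rw [← hN0, htθ] at h2
      have : θ * (Y / (2 * θ * X)) * X = Y / 2 := by
        field_simp
      rw [mul_zero, add_zero, this] at h2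
      linarith
    have : X ^ θ * N ^ (1-θ) = 0 := by
      rw [← hN0, Real.zero_rpow (by linarith : 1 - θ ≠ 0), mul_zero]
    linarith
  have ht : 0 < X / N := div_pos hXpos hNpos
  have h2 := h _ ht
  have e1 : (X/N) ^ (θ-1) = X ^ (θ-1) / N ^ (θ-1) := Real.div_rpow hX hNpos.le _
  have e2 : (X/N) ^ θ = X ^ θ / N ^ θ := Real.div_rpow hX hNpos.le _
  have eX : X ^ (θ-1) * X = X ^ θ := by
    nth_rewrite 2 [← Real.rpow_one X]
    rw [← Real.rpow_add hXpos]; congr 1; ring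
  have key : θ * (X/N) ^ (θ-1) * X + (1-θ) * (X/N) ^ θ * N = X ^ θ * N ^ (1-θ) := by
    rw [e1, e2]
    rw [div_eq_mul_inv, div_eq_mul_inv]
    have i1 : (N ^ (θ-1))⁻¹ = N ^ (1-θ) := by
      rw [← Real.rpow_neg hNpos.le]; congr 1; ring
    have i2 : (N ^ θ)⁻¹ * N = N ^ (1-θ) := by
      rw [← Real.rpow_neg hNpos.le]
      nth_rewrite 2 [← Real.rpow_one N]
      rw [← Real.rpow_add hNpos]; congr 1; ring
    calc θ * (X ^ (θ-1) * (N ^ (θ-1))⁻¹) * X + (1-θ) * (X ^ θ * (N ^ θ)⁻¹) * N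
        = θ * (X ^ (θ-1) * X) * (N ^ (θ-1))⁻¹ + (1-θ) * X ^ θ * ((N ^ θ)⁻¹ * N) := by ring
      _ = θ * X ^ θ * N ^ (1-θ) + (1-θ) * X ^ θ * N ^ (1-θ) := by rw [eX, i1, i2]
      _ = X ^ θ * N ^ (1-θ) := by ring
  linarith [key ▸ h2]

/-! ### Auxiliary operator lemmas -/

section OperatorLemmas

variable {H : Type*} [NormedAddCommGroup H] [InnerProductSpace ℂ H] [CompleteSpace H]

lemma cont_rpow {α : ℝ} (hα : 0 ≤ α) : Continuous (fun x : ℝ => x ^ α) :=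
  continuous_iff_continuousAt.mpr fun x => Real.continuousAt_rpow_const x α (Or.inr hα)

lemma smul_real_complex (r : ℝ) (X : H →L[ℂ] H) : ((r : ℂ)) • X = r • X := by
  rw [show ((r:ℂ)) = algebraMap ℝ ℂ r from rfl, algebraMap_smul]

lemma Rbar_eq_cfc (γ : ℝ) (T : ℕ) (Q : H →L[ℂ] H) (hQ : IsSelfAdjoint Q) :
    Rbar γ T Q = cfc (rfun γ T) Q := by
  have hbase : (1 : H →L[ℂ] H) - (γ : ℂ) • Q = cfc (fun x : ℝ => 1 - γ * x) Q := by
    rw [cfc_sub (fun _ : ℝ => (1:ℝ)) (fun x : ℝ => γ * x) Q (by fun_prop) (by fun_prop),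
      cfc_const_one ℝ Q, cfc_const_mul γ (fun x : ℝ => x) Q (by fun_prop), cfc_id' ℝ Q,
      smul_real_complex]
  have hpow : ∀ t : ℕ, ((1 : H →L[ℂ] H) - (γ : ℂ) • Q) ^ t
      = cfc (fun x : ℝ => (1 - γ * x) ^ t) Q := by
    intro t
    rw [hbase, ← cfc_pow (fun x : ℝ => 1 - γ * x) t Q (by fun_prop)]
  unfold Rbar
  rw [Finset.sum_congr rfl fun t _ => hpow t]
  rw [← cfc_sum (fun t (x : ℝ) => (1 - γ * x) ^ t) Q _ (fun i _ => by fun_prop)]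
  have : ((2 : ℂ) / (T : ℂ)) = ((2 / (T : ℝ) : ℝ) : ℂ) := by push_cast; ring
  have hc : ContinuousOn (∑ t ∈ Finset.Ioc (T/2) T, fun (x:ℝ) => (1 - γ*x)^t)
      (spectrum ℝ Q) := by
    have he : (∑ t ∈ Finset.Ioc (T/2) T, fun (x:ℝ) => (1 - γ*x)^t)
        = fun x => ∑ t ∈ Finset.Ioc (T/2) T, (1-γ*x)^t := by
      ext x; simp
    rw [he]; fun_prop
  rw [this, smul_real_complex, ← cfc_smul (2 / (T:ℝ)) _ Q hc]
  apply cfc_congr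
  intro x hx
  simp [rfun, smul_eq_mul, Finset.sum_apply]

lemma norm_apply_sq {P : H →L[ℂ] H} (hP : IsSelfAdjoint P) (w : H) :
    ‖P w‖^2 = RCLike.re ⟪(P * P) w, w⟫_ℂ := by
  have hadj : ContinuousLinearMap.adjoint P = P := by
    rw [← ContinuousLinearMap.star_eq_adjoint, hP.star_eq]
  calc ‖P w‖^2 = RCLike.re ⟪P w, P w⟫_ℂ := (inner_self_eq_norm_sq (𝕜 := ℂ) _).symm
    _ = RCLike.re ⟪ContinuousLinearMap.adjoint P (P w), w⟫_ℂ := by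
        rw [ContinuousLinearMap.adjoint_inner_left]
    _ = RCLike.re ⟪(P * P) w, w⟫_ℂ := by rw [hadj, ContinuousLinearMap.mul_apply]

lemma inner_re_mono {P P' : H →L[ℂ] H} (h : P ≤ P') (w : H) :
    RCLike.re ⟪P w, w⟫_ℂ ≤ RCLike.re ⟪P' w, w⟫_ℂ := by
  have h2 := ((ContinuousLinearMap.le_def P P').mp h).inner_nonneg_left w
  simp only [ContinuousLinearMap.sub_apply, inner_sub_left, map_sub] at h2
  have h3 := (RCLike.nonneg_iff.mp h2).1
  rw [map_sub] at h3
  linarith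

lemma re_inner_smul_real (r : ℝ) (x w : H) :
    RCLike.re ⟪r • x, w⟫_ℂ = r * RCLike.re ⟪x, w⟫_ℂ := by
  rw [RCLike.real_smul_eq_coe_smul (K := ℂ), inner_smul_left, RCLike.conj_ofReal,
    RCLike.re_ofReal_mul]

lemma interp_norm {A : H →L[ℂ] H} (hA : A.IsPositive) {p θ : ℝ} (hp : 0 < p)
    (hθ0 : 0 ≤ θ) (hθ1 : θ ≤ 1) (w : H) :
    ‖cfc (fun x : ℝ => x ^ (p*θ)) A w‖ ≤ ‖cfc (fun x : ℝ => x ^ p) A w‖ ^ θ * ‖w‖ ^ (1-θ) := by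
  have hAsa : IsSelfAdjoint A := hA.isSelfAdjoint
  have hApos : (0 : H →L[ℂ] H) ≤ A := (ContinuousLinearMap.nonneg_iff_isPositive A).mpr hA
  have hspec : ∀ x ∈ spectrum ℝ A, (0:ℝ) ≤ x := fun x hx => spectrum_nonneg_of_nonneg hApos hx
  rcases eq_or_lt_of_le hθ0 with hθz | hθpos
  · have h1 : cfc (fun x : ℝ => x ^ (p*θ)) A = 1 := by
      rw [← hθz]
      calc cfc (fun x : ℝ => x ^ (p*(0:ℝ))) A = cfc (fun _ : ℝ => (1:ℝ)) A := by
            apply cfc_congr; intro x _; simp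
        _ = 1 := cfc_const_one ℝ A
    rw [h1, ← hθz]
    simp
  set P1 := cfc (fun x : ℝ => x ^ (p*θ)) A with hP1
  set Pp := cfc (fun x : ℝ => x ^ p) A with hPp
  have hc1 : Continuous (fun x : ℝ => x ^ (p*θ)) := cont_rpow (by positivity)
  have hcp : Continuous (fun x : ℝ => x ^ p) := cont_rpow hp.le
  set Y := RCLike.re ⟪cfc (fun x : ℝ => x ^ (p*θ) * x ^ (p*θ)) A w, w⟫_ℂ with hYdef
  set X := RCLike.re ⟪cfc (fun x : ℝ => x ^ p * x ^ p) A w, w⟫_ℂ with hXdef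
  have hYeq : ‖P1 w‖^2 = Y := by
    rw [norm_apply_sq (cfc_predicate _ A) w, hYdef,
      cfc_mul _ _ A hc1.continuousOn hc1.continuousOn]
  have hXeq : ‖Pp w‖^2 = X := by
    rw [norm_apply_sq (cfc_predicate _ A) w, hXdef,
      cfc_mul _ _ A hcp.continuousOn hcp.continuousOn]
  have key : ∀ t : ℝ, 0 < t → Y ≤ θ * t ^ (θ-1) * X + (1-θ) * t ^ θ * ‖w‖^2 := by
    intro t ht
    have hmono : cfc (fun x : ℝ => x ^ (p*θ) * x ^ (p*θ)) A ≤
        cfc (fun x : ℝ => θ * t ^ (θ-1) * (x ^ p * x ^ p) + (1-θ) * t ^ θ) A := by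
      apply cfc_mono
      · intro x hx
        have hx0 := hspec x hx
        have e : x ^ (p*θ) * x ^ (p*θ) = (x ^ p * x ^ p) ^ θ := by
          rw [← Real.rpow_add' hx0 (by positivity)]
          rw [← Real.rpow_add' hx0 (by positivity : p + p ≠ 0)]
          rw [← Real.rpow_mul hx0]
          congr 1; ring
        rw [e]
        exact young_tangent (by positivity) ht hθ0 hθ1
      · exact (hc1.mul hc1).continuousOn
      · exact ((continuous_const.mul (hcp.mul hcp)).add continuous_const).continuousOn
    have hsplit : cfc (fun x : ℝ => θ * t ^ (θ-1) * (x ^ p * x ^ p) + (1-θ) * t ^ θ) A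
        = (θ * t ^ (θ-1)) • cfc (fun x : ℝ => x ^ p * x ^ p) A
          + algebraMap ℝ (H →L[ℂ] H) ((1-θ) * t ^ θ) := by
      rw [cfc_add A (fun x : ℝ => θ * t ^ (θ-1) * (x ^ p * x ^ p)) (fun _ : ℝ => (1-θ) * t ^ θ) ((continuous_const.mul (hcp.mul hcp)).continuousOn)
        (continuousOn_const)]
      rw [cfc_const_mul (θ * t ^ (θ-1)) (fun x : ℝ => x ^ p * x ^ p) A ((hcp.mul hcp)).continuousOn]
      rw [cfc_const _ A hAsa]
    have := inner_re_mono (hmono.trans_eq hsplit) w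
    rw [hYdef]
    refine this.trans ?_
    rw [ContinuousLinearMap.add_apply, inner_add_left, map_add,
      ContinuousLinearMap.smul_apply, re_inner_smul_real,
      Algebra.algebraMap_eq_smul_one, ContinuousLinearMap.smul_apply,
      ContinuousLinearMap.one_apply, re_inner_smul_real,
      inner_self_eq_norm_sq (𝕜 := ℂ)]
  have hYX : Y ≤ X ^ θ * (‖w‖^2) ^ (1-θ) := by
    apply young_opt (by rw [← hYeq]; positivity) (by rw [← hXeq]; positivity)
      (by positivity) hθ0 hθ1 key
  have hfinal : ‖P1 w‖^2 ≤ (‖Pp w‖ ^ θ * ‖w‖ ^ (1-θ))^2 := by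
    rw [hYeq]
    refine hYX.trans_eq ?_
    rw [mul_pow]
    congr 1
    · rw [← hXeq, ← Real.rpow_natCast (‖Pp w‖) 2, ← Real.rpow_mul (norm_nonneg _),
        ← Real.rpow_natCast (‖Pp w‖ ^ θ) 2, ← Real.rpow_mul (norm_nonneg _)]
      congr 1; push_cast; ring
    · rw [← Real.rpow_natCast (‖w‖) 2, ← Real.rpow_mul (norm_nonneg _),
        ← Real.rpow_natCast (‖w‖ ^ (1-θ)) 2, ← Real.rpow_mul (norm_nonneg _)]
      congr 1; push_cast; ring
  have h2 := Real.sqrt_le_sqrt hfinal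
  rwa [Real.sqrt_sq (norm_nonneg _), Real.sqrt_sq (by positivity)] at h2

end OperatorLemmas

/-- Proposition C.1, first bound.
Under the link condition with `a > 0`, `m > 0`, `0 ≤ s ≤ a`, `β = (a-s)/(2(a+s))`,
and `α ∈ [0, 1/2]`, there is a constant `c` (depending only on `a, s, α, m`) such
that for all step sizes `γ > 0` and positive even integers `T` with `γ‖T_s‖ < 1/4`,
all `u ∈ H` and all `R > 0`:
`‖T_s^α R̄_T(T_s) u‖ ≤ c (γT)^{-α} (d(R) + R (γT)^{-β})`. -/
theorem approximation_error_bound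
    {H K : Type*} [NormedAddCommGroup H] [InnerProductSpace ℂ H] [CompleteSpace H]
    [NormedAddCommGroup K] [InnerProductSpace ℂ K] [CompleteSpace K]
    (a s m α : ℝ) (ha : 0 < a) (hs : 0 ≤ s) (hsa : s ≤ a) (hm : 0 < m)
    (hα : α ∈ Set.Icc (0 : ℝ) (1 / 2)) :
    ∃ c : ℝ, ∀ (A : H →L[ℂ] H) (S : H →L[ℂ] K),
      A.IsPositive → Function.Injective A →
      (∀ h : H, m * ‖opPow A a h‖ ≤ ‖S h‖) →
      ∀ (γ : ℝ) (T : ℕ), 0 < γ → 0 < T → Even T → γ * ‖Ts S A s‖ < 1 / 4 →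
      ∀ (u : H) (R : ℝ), 0 < R →
        ‖opPow (Ts S A s) α (Rbar γ T (Ts S A s) u)‖ ≤
          c * (γ * (T : ℝ)) ^ (-α) *
            (distFn A a s u R + R * (γ * (T : ℝ)) ^ (-((a - s) / (2 * (a + s))))) := by
  obtain ⟨hα0, hα2⟩ := hα
  have has : 0 < a + s := by linarith
  set β : ℝ := (a - s) / (2 * (a + s)) with hβ
  have hβ0 : 0 ≤ β := div_nonneg (by linarith) (by linarith)
  have h2β1 : 2 * β ≤ 1 := by
    have h1 : 2 * β = (a-s)/(a+s) := by rw [hβ]; field_simp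
    rw [h1]
    exact (div_le_one has).mpr (by linarith)
  have hM0 : (0:ℝ) ≤ (1/m) ^ (2*β) := Real.rpow_nonneg (by positivity) _
  refine ⟨1 + (1/m) ^ (2*β), ?_⟩
  intro A S hA hAinj hlink γ T hγ hT hTe hsmall u R hR
  have hTR : (0:ℝ) < (T:ℝ) := by exact_mod_cast hT
  have hγT : (0:ℝ) < γ * T := by positivity
  have hd0 : 0 ≤ distFn A a s u R := Real.iInf_nonneg fun h => norm_nonneg _
  rcases subsingleton_or_nontrivial H with hsub | hnt
  · have h0 : opPow (Ts S A s) α (Rbar γ T (Ts S A s) u) = 0 := Subsingleton.elim _ _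
    rw [h0, norm_zero]
    have h1 : (0:ℝ) ≤ (γ * T) ^ (-α) := Real.rpow_nonneg hγT.le _
    have h2 : (0:ℝ) ≤ R * (γ*T)^(-β) := mul_nonneg hR.le (Real.rpow_nonneg hγT.le _)
    have h3 : (0:ℝ) ≤ 1 + (1/m) ^ (2*β) := by linarith
    apply mul_nonneg (mul_nonneg h3 h1) (by linarith)
  -- main case
  set Q : H →L[ℂ] H := Ts S A s with hQdef
  set B : H →L[ℂ] K := S ∘L opPow A s with hBdef
  have hQBB : Q = ContinuousLinearMap.adjoint B ∘L B := rfl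
  have hQpos : Q.IsPositive := by
    rw [hQBB]
    exact ContinuousLinearMap.isPositive_adjoint_comp_self B
  have hQsa : IsSelfAdjoint Q := hQpos.isSelfAdjoint
  have hQ0 : (0 : H →L[ℂ] H) ≤ Q := (ContinuousLinearMap.nonneg_iff_isPositive Q).mpr hQpos
  have hspec0 : ∀ x ∈ spectrum ℝ Q, (0:ℝ) ≤ x := fun x hx => spectrum_nonneg_of_nonneg hQ0 hx
  have hspec1 : ∀ x ∈ spectrum ℝ Q, γ * x < 1/4 := by
    intro x hx
    have h1 : x ≤ ‖Q‖ := by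
      have h2 := spectrum.norm_le_norm_of_mem hx
      calc x ≤ |x| := le_abs_self x
        _ = ‖x‖ := (Real.norm_eq_abs x).symm
        _ ≤ ‖Q‖ := h2
    calc γ * x ≤ γ * ‖Q‖ := mul_le_mul_of_nonneg_left h1 hγ.le
      _ < 1/4 := hsmall
  have hAsa : IsSelfAdjoint A := hA.isSelfAdjoint
  have hA0 : (0 : H →L[ℂ] H) ≤ A := (ContinuousLinearMap.nonneg_iff_isPositive A).mpr hA
  have hAspec : ∀ x ∈ spectrum ℝ A, (0:ℝ) ≤ x := fun x hx => spectrum_nonneg_of_nonneg hA0 hx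
  have hcontr : Continuous (rfun γ T) := by unfold rfun; fun_prop
  have hcα : Continuous (fun x:ℝ => x ^ α) := cont_rpow hα0
  set C : H →L[ℂ] H := cfc (fun x : ℝ => x ^ α * rfun γ T x) Q with hCdef
  have hCsa : IsSelfAdjoint C := cfc_predicate _ Q
  have hCapp : ∀ v : H, opPow Q α (Rbar γ T Q v) = C v := by
    intro v
    rw [Rbar_eq_cfc γ T Q hQsa]
    unfold opPow
    rw [← ContinuousLinearMap.mul_apply, ← cfc_mul _ _ Q hcα.continuousOn hcontr.continuousOn]
  have hfilter : ∀ θ : ℝ, 0 ≤ θ → θ ≤ 1 →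
      ‖cfc (fun x:ℝ => x ^ θ * rfun γ T x) Q‖ ≤ (γ*T)^(-θ) := by
    intro θ h0 h1
    apply norm_cfc_le (Real.rpow_nonneg hγT.le _)
    intro x hx
    have hx0 := hspec0 x hx
    have hx4 := hspec1 x hx
    rw [Real.norm_eq_abs, abs_of_nonneg (mul_nonneg (Real.rpow_nonneg hx0 _)
      (rfun_nonneg (by linarith)))]
    exact scalar_bound hγ hT hTe hx0 hx4 h0 h1
  have hnC : ‖C‖ ≤ (γ*T)^(-α) := hfilter α hα0 (by linarith)
  have hnHalf : ‖cfc (fun x:ℝ => x ^ (1/2 + α : ℝ) * rfun γ T x) Q‖ ≤ (γ*T)^(-(1/2 + α : ℝ)) :=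
    hfilter (1/2 + α) (by linarith) (by linarith)
  have hhalfop : ∀ v : H, opPow Q (1/2 : ℝ) (C v)
      = cfc (fun x:ℝ => x ^ (1/2 + α : ℝ) * rfun γ T x) Q v := by
    intro v
    unfold opPow
    rw [hCdef, ← ContinuousLinearMap.mul_apply,
      ← cfc_mul (fun x : ℝ => x ^ (1/2:ℝ)) (fun x : ℝ => x ^ α * rfun γ T x) Q (cont_rpow (α := 1/2) (by norm_num)).continuousOn (hcα.mul hcontr).continuousOn]
    congr 1
    apply cfc_congr
    intro x hx
    have hx0 := hspec0 x hx
    show x ^ (1/2 : ℝ) * (x ^ α * rfun γ T x) = x ^ (1/2 + α : ℝ) * rfun γ T x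
    rw [← mul_assoc, ← Real.rpow_add' hx0 (by positivity)]
  have hlink2 : ∀ w : H, ‖opPow A (a+s) w‖ ≤ (1/m) * ‖opPow Q (1/2:ℝ) w‖ := by
    intro w
    have hBw : ‖B w‖ = ‖opPow Q (1/2:ℝ) w‖ := by
      have h1 : ‖B w‖^2 = RCLike.re ⟪Q w, w⟫_ℂ := by
        have e : ⟪Q w, w⟫_ℂ = ⟪B w, B w⟫_ℂ :=
          ContinuousLinearMap.adjoint_inner_left B w (B w)
        rw [e]
        exact (inner_self_eq_norm_sq (𝕜 := ℂ) _).symm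
      have h2 : ‖opPow Q (1/2:ℝ) w‖^2 = RCLike.re ⟪Q w, w⟫_ℂ := by
        unfold opPow
        rw [norm_apply_sq (cfc_predicate _ Q) w]
        have hhalf : (cfc (fun x:ℝ => x ^ ((1:ℝ)/2)) Q) * (cfc (fun x:ℝ => x ^ ((1:ℝ)/2)) Q)
            = Q := by
          rw [← cfc_mul _ _ Q (cont_rpow (by norm_num)).continuousOn
            (cont_rpow (by norm_num)).continuousOn]
          calc cfc (fun x:ℝ => x ^ ((1:ℝ)/2) * x ^ ((1:ℝ)/2)) Q = cfc (fun x:ℝ => x) Q := by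
                apply cfc_congr; intro x hx
                show x ^ ((1:ℝ)/2) * x ^ ((1:ℝ)/2) = x
                rw [← Real.rpow_add' (hspec0 x hx) (by norm_num)]
                norm_num
            _ = Q := cfc_id' ℝ Q
        rw [hhalf]
      have h3 := h1.trans h2.symm
      exact (pow_left_inj₀ (norm_nonneg _) (norm_nonneg _) two_ne_zero).mp h3
    have hm1 : m * ‖opPow A (a+s) w‖ ≤ ‖B w‖ := by
      have hAcomp : opPow A a (opPow A s w) = opPow A (a+s) w := by
        unfold opPow
        rw [← ContinuousLinearMap.mul_apply,
          ← cfc_mul _ _ A (cont_rpow ha.le).continuousOn (cont_rpow hs).continuousOn]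
        congr 1
        apply cfc_congr
        intro x hx
        show x ^ a * x ^ s = x ^ (a+s)
        rw [← Real.rpow_add' (hAspec x hx) (by positivity)]
      rw [← hAcomp, hBdef, ContinuousLinearMap.comp_apply]
      exact hlink (opPow A s w)
    rw [← hBw]
    calc ‖opPow A (a+s) w‖ ≤ ‖B w‖ / m := by
          rw [le_div_iff₀ hm]
          linarith
      _ = (1/m) * ‖B w‖ := by ring
  set Dop : H →L[ℂ] H := opPow A (a-s) with hDdef
  have hDsa : IsSelfAdjoint Dop := cfc_predicate _ A
  have hβsum : (a+s) * (2*β) = a - s := by rw [hβ]; field_simp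
  have hDC : ∀ v : H, ‖Dop (C v)‖ ≤ ((1/m) ^ (2*β) * (γ*T)^(-(α+β))) * ‖v‖ := by
    intro v
    have hDrew : Dop = cfc (fun x:ℝ => x ^ ((a+s)*(2*β))) A := by
      rw [hDdef]; unfold opPow; rw [hβsum]
    have step2 : ‖Dop (C v)‖ ≤ ‖opPow A (a+s) (C v)‖ ^ (2*β) * ‖C v‖ ^ (1-2*β) := by
      rw [hDrew]
      exact interp_norm hA has (by linarith) h2β1 (C v)
    have step3 : ‖opPow A (a+s) (C v)‖ ≤ (1/m) * ((γ*T)^(-(1/2 + α : ℝ)) * ‖v‖) := by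
      refine (hlink2 (C v)).trans ?_
      apply mul_le_mul_of_nonneg_left _ (by positivity)
      rw [hhalfop v]
      calc ‖cfc (fun x:ℝ => x ^ (1/2 + α : ℝ) * rfun γ T x) Q v‖
          ≤ ‖cfc (fun x:ℝ => x ^ (1/2 + α : ℝ) * rfun γ T x) Q‖ * ‖v‖ :=
            ContinuousLinearMap.le_opNorm _ v
        _ ≤ (γ*T)^(-(1/2 + α : ℝ)) * ‖v‖ := mul_le_mul_of_nonneg_right hnHalf (norm_nonneg v)
    have step4 : ‖C v‖ ≤ (γ*T)^(-α) * ‖v‖ :=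
      (C.le_opNorm v).trans (mul_le_mul_of_nonneg_right hnC (norm_nonneg v))
    calc ‖Dop (C v)‖
        ≤ ((1/m) * ((γ*T)^(-(1/2 + α : ℝ)) * ‖v‖)) ^ (2*β) * ((γ*T)^(-α) * ‖v‖) ^ (1-2*β) := by
          refine step2.trans ?_
          apply mul_le_mul (Real.rpow_le_rpow (norm_nonneg _) step3 (by linarith))
            (Real.rpow_le_rpow (norm_nonneg _) step4 (by linarith))
            (Real.rpow_nonneg (norm_nonneg _) _) (by positivity)
      _ = ((1/m) ^ (2*β) * (γ*T)^(-(α+β))) * ‖v‖ := by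
          rw [Real.mul_rpow (by positivity) (by positivity),
            Real.mul_rpow (Real.rpow_nonneg hγT.le _) (norm_nonneg _),
            Real.mul_rpow (Real.rpow_nonneg hγT.le _) (norm_nonneg _),
            ← Real.rpow_mul hγT.le, ← Real.rpow_mul hγT.le]
          have e1 : (γ*T) ^ ((-(1/2 + α : ℝ))*(2*β)) * (γ*T) ^ ((-α)*(1-2*β))
              = (γ*T) ^ (-(α+β)) := by
            rw [← Real.rpow_add hγT]; congr 1; ring
          have e2 : ‖v‖ ^ (2*β) * ‖v‖ ^ (1-2*β) = ‖v‖ := by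
            rw [← Real.rpow_add' (norm_nonneg v) (by norm_num)]
            norm_num
          calc (1/m) ^ (2*β) * ((γ*T) ^ ((-(1/2 + α : ℝ))*(2*β)) * ‖v‖ ^ (2*β))
              * ((γ*T) ^ ((-α)*(1-2*β)) * ‖v‖ ^ (1-2*β))
              = (1/m) ^ (2*β) * ((γ*T) ^ ((-(1/2 + α : ℝ))*(2*β)) * (γ*T) ^ ((-α)*(1-2*β)))
                * (‖v‖ ^ (2*β) * ‖v‖ ^ (1-2*β)) := by ring
            _ = ((1/m) ^ (2*β) * (γ*T)^(-(α+β))) * ‖v‖ := by rw [e1, e2]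
  have hCD : ‖C ∘L Dop‖ ≤ (1/m) ^ (2*β) * (γ*T)^(-(α+β)) := by
    have hadj : ContinuousLinearMap.adjoint (Dop ∘L C) = C ∘L Dop := by
      rw [ContinuousLinearMap.adjoint_comp, ← ContinuousLinearMap.star_eq_adjoint,
        ← ContinuousLinearMap.star_eq_adjoint, hCsa.star_eq, hDsa.star_eq]
    have hnorm_eq : ‖C ∘L Dop‖ = ‖Dop ∘L C‖ := by
      rw [← hadj]
      exact LinearIsometryEquiv.norm_map (ContinuousLinearMap.adjoint) (Dop ∘L C)
    rw [hnorm_eq]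
    apply ContinuousLinearMap.opNorm_le_bound _ (by positivity)
    intro v
    rw [ContinuousLinearMap.comp_apply]
    exact hDC v
  set d := distFn A a s u R with hddef
  have main : ∀ ε : ℝ, 0 < ε → ‖C u‖ ≤ (γ*T)^(-α) * (d + ε)
      + ((1/m)^(2*β) * ((γ*T)^(-α) * (γ*T)^(-β))) * R := by
    intro ε hε
    haveI hne : Nonempty {h : H // ‖h‖ ≤ R} := ⟨⟨0, by simp [hR.le]⟩⟩
    have hlt : distFn A a s u R < d + ε := by rw [← hddef]; linarith
    obtain ⟨⟨h, hhR⟩, hh⟩ := exists_lt_of_ciInf_lt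
      (f := fun h : {h : H // ‖h‖ ≤ R} => ‖opPow A (a-s) h.1 - u‖) hlt
    have hhd : ‖u - Dop h‖ ≤ d + ε := by
      rw [norm_sub_rev, hDdef]
      exact hh.le
    have hsplit2 : (γ*T) ^ (-(α+β)) = (γ*T)^(-α) * (γ*T)^(-β) := by
      rw [← Real.rpow_add hγT]; congr 1; ring
    calc ‖C u‖ = ‖C (u - Dop h) + C (Dop h)‖ := by rw [← map_add, sub_add_cancel]
      _ ≤ ‖C (u - Dop h)‖ + ‖C (Dop h)‖ := norm_add_le _ _
      _ ≤ ‖C‖ * ‖u - Dop h‖ + ‖C ∘L Dop‖ * ‖h‖ := by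
          apply add_le_add (C.le_opNorm _)
          rw [← ContinuousLinearMap.comp_apply]
          exact (C ∘L Dop).le_opNorm h
      _ ≤ (γ*T)^(-α) * (d + ε) + ((1/m)^(2*β) * (γ*T)^(-(α+β))) * R := by
          apply add_le_add
          · exact mul_le_mul hnC hhd (norm_nonneg _) (Real.rpow_nonneg hγT.le _)
          · exact mul_le_mul hCD hhR (norm_nonneg _)
              (mul_nonneg hM0 (Real.rpow_nonneg hγT.le _))
      _ = (γ*T)^(-α) * (d + ε) + ((1/m)^(2*β) * ((γ*T)^(-α) * (γ*T)^(-β))) * R := by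
          rw [hsplit2]
  have hCu : ‖opPow Q α (Rbar γ T Q u)‖ = ‖C u‖ := by rw [hCapp u]
  rw [hCu]
  have hpowα : (0:ℝ) < (γ*T)^(-α) := Real.rpow_pos_of_pos hγT _
  have hb : (0:ℝ) ≤ (γ*T)^(-β) := Real.rpow_nonneg hγT.le _
  have final : ∀ δ : ℝ, 0 < δ →
      ‖C u‖ ≤ (1 + (1/m)^(2*β)) * (γ*T)^(-α) * (d + R*(γ*T)^(-β)) + δ := by
    intro δ hδ
    have h1 := main (δ / (γ*T)^(-α)) (by positivity)
    refine h1.trans ?_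
    have hrw : (γ*T)^(-α) * (d + δ/(γ*T)^(-α)) = (γ*T)^(-α)*d + δ := by
      field_simp
    rw [hrw]
    nlinarith [mul_nonneg hM0 (mul_nonneg hpowα.le hd0),
      mul_nonneg hpowα.le (mul_nonneg hR.le hb),
      mul_nonneg hM0 (mul_nonneg hpowα.le (mul_nonneg hR.le hb))]
  by_contra hcon
  push_neg at hcon
  have h2 := final ((‖C u‖ - (1 + (1/m)^(2*β)) * (γ*T)^(-α) * (d + R*(γ*T)^(-β)))/2)
    (by linarith)
  linarith
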